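/- Let M be a module over a ring R such that M decomposes as a (possibly infinite) direct sum of submodules each of whose endomorphism ring is local. Then any two such decompositions of M into direct sums of modules with local endomorphism rings are isomorphic: there is a bijection between the index sets matching summands up to isomorphism (Krull–Schmidt–Remak–Azumaya). -/

import Mathlib

open DirectSum

section basics
variable {R : Type*} [Ring R]

theorem nontrivial_of_isLocalRing_end {N : Type*} [AddCommGroup N] [Module R N]
    (h : IsLocalRing (Module.End R N)) : Nontrivial N := by
  by_contra hn
  rw [not_nontrivial_iff_subsingleton] at hn
  have : Subsingleton (Module.End R N) := ⟨fun f g => LinearMap.ext fun x => Subsingleton.elim _ _⟩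
  haveI := h.toNontrivial
  exact absurd (Subsingleton.elim (0 : Module.End R N) 1) (zero_ne_one)

/-- noncommutative: in a local ring a sum of two elements being a unit forces a unit term -/
theorem isUnit_or_isUnit_of_isUnit_add' {A : Type*} [Ring A] [hA : IsLocalRing A]
    {x y : A} (h : IsUnit (x + y)) : IsUnit x ∨ IsUnit y := by
  obtain ⟨u, hu⟩ := h
  have h1 : (↑u⁻¹ : A) * x + (↑u⁻¹ : A) * y = 1 := by
    rw [← mul_add, ← hu]; simp
  rcases hA.isUnit_or_isUnit_of_add_one h1 with hx | hy
  · left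
    have : x = (u : A) * ((↑u⁻¹ : A) * x) := by rw [← mul_assoc]; simp
    rw [this]; exact (u.isUnit).mul hx
  · right
    have : y = (u : A) * ((↑u⁻¹ : A) * y) := by rw [← mul_assoc]; simp
    rw [this]; exact (u.isUnit).mul hy

theorem isLocalRing_of_ringEquiv' {A B : Type*} [Ring A] [Ring B] (e : A ≃+* B)
    (h : IsLocalRing A) : IsLocalRing B := by
  haveI : Nontrivial A := h.toNontrivial
  haveI : Nontrivial B := e.injective.nontrivial
  refine ⟨fun {a b} hab => ?_⟩
  have h1 : e.symm a + e.symm b = 1 := by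
    rw [← map_add, hab, map_one]
  rcases h.isUnit_or_isUnit_of_add_one h1 with hu | hu
  · left; simpa using hu.map e
  · right; simpa using hu.map e

/-- the ring equivalence of endomorphism rings induced by a linear equivalence
(noncommutative base ring) -/
def endCongr {M M₂ : Type*} [AddCommGroup M] [AddCommGroup M₂]
    [Module R M] [Module R M₂] (e : M ≃ₗ[R] M₂) :
    Module.End R M ≃+* Module.End R M₂ where
  toFun f := (e.toLinearMap.comp f).comp e.symm.toLinearMap
  invFun g := (e.symm.toLinearMap.comp g).comp e.toLinearMap
  left_inv f := by ext x; simp [LinearMap.comp_apply]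
  right_inv g := by ext x; simp [LinearMap.comp_apply]
  map_mul' f g := by ext x; simp [LinearMap.comp_apply, Module.End.mul_apply]
  map_add' f g := by ext x; simp [LinearMap.comp_apply]

theorem isLocalRing_end_congr {M M₂ : Type*} [AddCommGroup M] [AddCommGroup M₂]
    [Module R M] [Module R M₂] (e : M ≃ₗ[R] M₂)
    (h : IsLocalRing (Module.End R M)) : IsLocalRing (Module.End R M₂) :=
  isLocalRing_of_ringEquiv' (endCongr e) h

theorem exists_isUnit_of_isUnit_sum {A : Type*} [Ring A] [IsLocalRing A]
    {J : Type*} (s : Finset J) (f : J → A) (h : IsUnit (∑ j ∈ s, f j)) :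
    ∃ j ∈ s, IsUnit (f j) := by
  classical
  induction s using Finset.induction_on with
  | empty => simp only [Finset.sum_empty] at h; exact absurd h not_isUnit_zero
  | insert a s hx ih =>
    rw [Finset.sum_insert hx] at h
    rcases isUnit_or_isUnit_of_isUnit_add' h with hu | hu
    · exact ⟨a, Finset.mem_insert_self a s, hu⟩
    · obtain ⟨j, hj, hju⟩ := ih hu
      exact ⟨j, Finset.mem_insert_of_mem hj, hju⟩

theorem idem_eq_zero_or_one {A : Type*} [Ring A] [hA : IsLocalRing A]
    {p : A} (hp : p * p = p) : p = 0 ∨ p = 1 := by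
  have h1 : p + (1 - p) = 1 := by rw [add_sub_cancel]
  rcases hA.isUnit_or_isUnit_of_add_one h1 with hu | hu
  · right
    have : p * p = p * 1 := by rw [hp, mul_one]
    exact hu.mul_left_cancel this
  · left
    have : (1 - p) * p = (1 - p) * 0 := by
      rw [sub_mul, one_mul, hp, mul_zero, sub_self]
    exact hu.mul_left_cancel this

end basics
section core
variable {R : Type*} [Ring R] {M : Type*} [AddCommGroup M] [Module R M]
variable {κ : Type*} [DecidableEq κ]

open Submodule LinearMap

/-- the projection onto the `j`-th factor of an internal direct sum decomposition -/
noncomputable def projT (T : κ → Submodule R M) (hT : DirectSum.IsInternal T) (j : κ) :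
    M →ₗ[R] T j :=
  (DirectSum.component R κ (fun j => (T j : Submodule R M)) j) ∘ₗ
    (LinearEquiv.ofBijective (DirectSum.coeLinearMap T) hT).symm.toLinearMap

theorem projT_apply_of_mem (T : κ → Submodule R M) (hT : DirectSum.IsInternal T) {j : κ}
    {x : M} (hx : x ∈ T j) : projT T hT j x = ⟨x, hx⟩ := by
  simpa [projT, ← DirectSum.apply_eq_component] using
    hT.ofBijective_coeLinearMap_of_mem hx

theorem projT_apply_of_mem_ne (T : κ → Submodule R M) (hT : DirectSum.IsInternal T) {j j' : κ}
    (hne : j' ≠ j) {x : M} (hx : x ∈ T j) : projT T hT j' x = 0 := by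
  simpa [projT, ← DirectSum.apply_eq_component] using
    hT.ofBijective_coeLinearMap_of_mem_ne hne.symm hx

theorem exists_finset_sum_proj (T : κ → Submodule R M) (hT : DirectSum.IsInternal T) (x : M) :
    ∃ s : Finset κ, (∀ j ∉ s, projT T hT j x = 0) ∧
      (∑ j ∈ s, ((projT T hT j x : M))) = x := by
  classical
  set d := (LinearEquiv.ofBijective (DirectSum.coeLinearMap T) hT).symm x with hd
  have hproj : ∀ j, projT T hT j x = d j := fun j => rfl
  refine ⟨d.support, fun j hj => ?_, ?_⟩
  · rw [hproj]
    exact DFinsupp.notMem_support_iff.mp hj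
  · have hx : DirectSum.coeLinearMap T d = x := by
      rw [hd]
      exact (LinearEquiv.ofBijective (DirectSum.coeLinearMap T) hT).apply_symm_apply x
    calc (∑ j ∈ d.support, ((projT T hT j x : M)))
        = ∑ j ∈ d.support, DirectSum.coeLinearMap T (DirectSum.of (fun j => T j) j (d j)) := by
          refine Finset.sum_congr rfl fun j _ => ?_
          rw [hproj, DirectSum.coeLinearMap_of]
      _ = DirectSum.coeLinearMap T (∑ j ∈ d.support, DirectSum.of (fun j => T j) j (d j)) := by
          rw [map_sum]
      _ = DirectSum.coeLinearMap T d := by rw [DirectSum.sum_support_of]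
      _ = x := hx

/-- the composite `A → M → T j → M → A` associated to a direct summand `A` (with complement `B`)
and an internal decomposition `T` -/
noncomputable def fmap (T : κ → Submodule R M) (hT : DirectSum.IsInternal T)
    {A B : Submodule R M} (hAB : IsCompl A B) (j : κ) : Module.End R A :=
  ((A.linearProjOfIsCompl B hAB) ∘ₗ (T j).subtype) ∘ₗ ((projT T hT j) ∘ₗ A.subtype)

theorem exists_isUnit_fmap (T : κ → Submodule R M) (hT : DirectSum.IsInternal T)
    {A B : Submodule R M} (hAB : IsCompl A B)
    (hAloc : IsLocalRing (Module.End R A)) : ∃ j, IsUnit (fmap T hT hAB j) := by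
  haveI := hAloc
  haveI : Nontrivial A := nontrivial_of_isLocalRing_end hAloc
  obtain ⟨a, ha⟩ := exists_ne (0 : A)
  obtain ⟨s, hs0, hssum⟩ := exists_finset_sum_proj T hT (a : M)
  set F : Module.End R A := ∑ j ∈ s, fmap T hT hAB j with hF
  have hFa : F a = a := by
    have : F a = ∑ j ∈ s, A.linearProjOfIsCompl B hAB ((projT T hT j (a : M) : M)) := by
      rw [hF, LinearMap.sum_apply]
      rfl
    rw [this, ← map_sum, hssum]
    exact Submodule.linearProjOfIsCompl_apply_left hAB a
  have hga : (1 - F) a = 0 := by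
    simp [LinearMap.sub_apply, hFa]
  have hgnu : ¬ IsUnit (1 - F) := by
    intro hu
    have hinj := ((Module.End.isUnit_iff _).mp hu).injective
    apply ha
    apply hinj
    simpa using hga
  have h1 : IsUnit (F + (1 - F)) := by
    rw [add_sub_cancel]
    exact isUnit_one
  rcases isUnit_or_isUnit_of_isUnit_add' h1 with hu | hu
  · obtain ⟨j, _, hj⟩ := exists_isUnit_of_isUnit_sum s _ hu
    exact ⟨j, hj⟩
  · exact absurd hu hgnu

theorem unit_step (T : κ → Submodule R M) (hT : DirectSum.IsInternal T)
    {A B : Submodule R M} (hAB : IsCompl A B) (hA : Nontrivial A) {j : κ}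
    (hloc : IsLocalRing (Module.End R (T j))) (hf : IsUnit (fmap T hT hAB j)) :
    Nonempty (A ≃ₗ[R] T j) ∧ IsCompl (T j) B ∧
      ∀ x : T j, (x : M) ≠ 0 → A.linearProjOfIsCompl B hAB (x : M) ≠ 0 := by
  haveI := hloc
  set u : A →ₗ[R] T j := (projT T hT j) ∘ₗ A.subtype with hu
  set v : T j →ₗ[R] A := (A.linearProjOfIsCompl B hAB) ∘ₗ (T j).subtype with hv
  have hfvu : fmap T hT hAB j = v ∘ₗ u := by
    rw [fmap, hv, hu, LinearMap.comp_assoc]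
  obtain ⟨φ, hφ⟩ := hf
  set w : T j →ₗ[R] A := (↑(φ⁻¹) : Module.End R A) ∘ₗ v with hw
  have hwu : w ∘ₗ u = LinearMap.id := by
    rw [hw, LinearMap.comp_assoc, ← hfvu, ← hφ]
    have : (↑(φ⁻¹) : Module.End R A) ∘ₗ (↑φ : Module.End R A) = (↑(φ⁻¹ * φ) : Module.End R A) := rfl
    rw [this, inv_mul_cancel]
    rfl
  set p : Module.End R (T j) := u ∘ₗ w with hp
  have hwu' : ∀ y : A, w (u y) = y := by
    intro y
    have := LinearMap.ext_iff.mp hwu y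
    simpa [LinearMap.comp_apply] using this
  have hidem : p * p = p := by
    refine LinearMap.ext fun x => ?_
    rw [Module.End.mul_apply]
    show u (w (u (w x))) = u (w x)
    rw [hwu' (w x)]
  rcases idem_eq_zero_or_one hidem with hp0 | hp1
  · exfalso
    obtain ⟨a, ha⟩ := exists_ne (0 : A)
    apply ha
    have hpu : p (u a) = 0 := by rw [hp0]; rfl
    have : u (w (u a)) = 0 := hpu
    rw [hwu' a] at this
    calc a = w (u a) := (hwu' a).symm
    _ = w 0 := by rw [this]
    _ = 0 := map_zero w
  · -- p = 1, so u and w are mutually inverse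
    have huw : u ∘ₗ w = LinearMap.id := by
      rw [← hp]
      exact hp1
    have hvinj : Function.Injective v := by
      intro x y hxy
      have : w x = w y := by rw [hw]; simp only [LinearMap.comp_apply]; rw [hxy]
      calc x = (u ∘ₗ w) x := by rw [huw]; rfl
      _ = u (w y) := by rw [LinearMap.comp_apply, this]
      _ = (u ∘ₗ w) y := rfl
      _ = y := by rw [huw]; rfl
    have hvsurj : Function.Surjective v := by
      intro a
      refine ⟨u ((↑(φ⁻¹) : Module.End R A) a), ?_⟩
      have : v (u ((↑(φ⁻¹) : Module.End R A) a)) = (v ∘ₗ u) ((↑(φ⁻¹) : Module.End R A) a) := rfl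
      rw [this, ← hfvu, ← hφ]
      have : (↑φ : Module.End R A) ((↑(φ⁻¹) : Module.End R A) a)
          = ((↑φ * ↑(φ⁻¹) : Module.End R A)) a := rfl
      rw [this]
      norm_cast
      rw [mul_inv_cancel]
      rfl
    refine ⟨⟨LinearEquiv.ofLinear u w huw hwu⟩, ?_, ?_⟩
    · -- IsCompl (T j) B
      set vequiv : (T j) ≃ₗ[R] A := LinearEquiv.ofBijective v ⟨hvinj, hvsurj⟩ with hveq
      set g : M →ₗ[R] T j := vequiv.symm.toLinearMap ∘ₗ (A.linearProjOfIsCompl B hAB) with hg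
      have hgproj : ∀ x : T j, g (x : M) = x := by
        intro x
        have h1 : g (x : M) = vequiv.symm (v x) := rfl
        rw [h1]
        have : v x = vequiv x := rfl
        rw [this, LinearEquiv.symm_apply_apply]
      have hker : LinearMap.ker g = B := by
        ext x
        constructor
        · intro hx
          have : vequiv.symm (A.linearProjOfIsCompl B hAB x) = 0 := hx
          have h0 : A.linearProjOfIsCompl B hAB x = 0 := by
            have := congrArg vequiv this
            simpa using this
          exact (Submodule.linearProjOfIsCompl_apply_eq_zero_iff hAB).mp h0
        · intro hx
          have h0 : A.linearProjOfIsCompl B hAB x = 0 :=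
            (Submodule.linearProjOfIsCompl_apply_eq_zero_iff hAB).mpr hx
          show vequiv.symm (A.linearProjOfIsCompl B hAB x) = 0
          rw [h0, map_zero]
      have := LinearMap.isCompl_of_proj hgproj
      rwa [hker] at this
    · -- injectivity statement
      intro x hx h0
      apply hx
      have : v x = 0 := h0
      have := hvinj (a₂ := 0) (by simpa using this)
      simp [this]
end core
section decomp
variable {R : Type*} [Ring R] {M : Type*} [AddCommGroup M] [Module R M]
  {M₂ : Type*} [AddCommGroup M₂] [Module R M₂]
variable {ι : Type*} [DecidableEq ι]

open Submodule

theorem isCompl_of_isInternal {S : ι → Submodule R M} (hS : DirectSum.IsInternal S) (i : ι) :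
    IsCompl (S i) (⨆ i' ∈ ({i' | i' ≠ i} : Set ι), S i') := by
  constructor
  · have := hS.submodule_iSupIndep i
    simpa [Set.mem_setOf_eq] using this
  · rw [codisjoint_iff]
    rw [← hS.submodule_iSup_eq_top]
    exact (iSup_split_single S i).symm

theorem isInternal_map_equiv {S : ι → Submodule R M} (hS : DirectSum.IsInternal S)
    (e : M ≃ₗ[R] M₂) :
    DirectSum.IsInternal (fun i => (S i).map (e : M →ₗ[R] M₂)) := by
  rw [DirectSum.isInternal_submodule_iff_iSupIndep_and_iSup_eq_top]
  constructor
  · have h1 : (fun i => (S i).map (e : M →ₗ[R] M₂)) = fun i => (orderIsoMapComap e) (S i) := rfl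
    rw [h1]
    exact (iSupIndep_map_orderIso_iff (orderIsoMapComap e)).mpr hS.submodule_iSupIndep
  · rw [← Submodule.map_iSup, hS.submodule_iSup_eq_top, Submodule.map_top,
      LinearEquiv.range]
end decomp
section main
universe u
variable {R : Type u} [Ring R]

open Submodule

/-- every summand of the `S`-decomposition is isomorphic to a summand of the `T`-decomposition,
which can moreover replace it -/
theorem exists_equiv_summand {M : Type*} [AddCommGroup M] [Module R M]
    {ι : Type*} {κ : Type*} [DecidableEq ι] [DecidableEq κ]
    (S : ι → Submodule R M) (T : κ → Submodule R M)
    (hS : DirectSum.IsInternal S) (hT : DirectSum.IsInternal T)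
    (hSloc : ∀ i, IsLocalRing (Module.End R (S i)))
    (hTloc : ∀ j, IsLocalRing (Module.End R (T j))) (i : ι) :
    ∃ j, Nonempty ((S i) ≃ₗ[R] (T j)) ∧
      IsCompl (T j) (⨆ i' ∈ ({i' | i' ≠ i} : Set ι), S i') := by
  have hAB := isCompl_of_isInternal hS i
  obtain ⟨j, hj⟩ := exists_isUnit_fmap T hT hAB (hSloc i)
  have hnt : Nontrivial (S i) := nontrivial_of_isLocalRing_end (hSloc i)
  obtain ⟨heq, hcompl, _⟩ := unit_step T hT hAB hnt (hTloc j) hj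
  exact ⟨j, heq, hcompl⟩

theorem finCase : ∀ (n : ℕ) {M : Type*} [AddCommGroup M] [Module R M]
    {ι : Type*} {κ : Type*} [DecidableEq ι] [DecidableEq κ]
    (S : ι → Submodule R M) (T : κ → Submodule R M),
    DirectSum.IsInternal S → DirectSum.IsInternal T →
    (∀ i, IsLocalRing (Module.End R (S i))) →
    (∀ j, IsLocalRing (Module.End R (T j))) →
    ∀ {N : Type*} [AddCommGroup N] [Module R N],
    {j | Nonempty ((T j) ≃ₗ[R] N)}.Finite →
    {j | Nonempty ((T j) ≃ₗ[R] N)}.ncard = n →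
    {i | Nonempty ((S i) ≃ₗ[R] N)}.Finite ∧ {i | Nonempty ((S i) ≃ₗ[R] N)}.ncard = n := by
  intro n
  induction n with
  | zero =>
    intro M _ _ ι κ _ _ S T hS hT hSloc hTloc N _ _ hK hn
    have hKempty : {j | Nonempty ((T j) ≃ₗ[R] N)} = ∅ := (Set.ncard_eq_zero hK).mp hn
    have hIempty : {i | Nonempty ((S i) ≃ₗ[R] N)} = ∅ := by
      ext i
      simp only [Set.mem_setOf_eq, Set.mem_empty_iff_false, iff_false]
      rintro ⟨eN⟩
      obtain ⟨j, ⟨ej⟩, -⟩ := exists_equiv_summand S T hS hT hSloc hTloc i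
      have : j ∈ {j | Nonempty ((T j) ≃ₗ[R] N)} := ⟨ej.symm.trans eN⟩
      rw [hKempty] at this
      exact this
    rw [hIempty]
    exact ⟨Set.finite_empty, Set.ncard_empty _⟩
  | succ n ih =>
    intro M _ _ ι κ _ _ S T hS hT hSloc hTloc N _ _ hK hn
    set K := {j | Nonempty ((T j) ≃ₗ[R] N)} with hKdef
    obtain ⟨j₀, hj₀⟩ : K.Nonempty := Set.nonempty_of_ncard_ne_zero (by rw [hn]; simp)
    -- replacement step
    obtain ⟨i₀, ⟨eqv₀⟩, hcompl⟩ := exists_equiv_summand T S hT hS hTloc hSloc j₀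
    set Q : Submodule R M := ⨆ j ∈ ({j | j ≠ j₀} : Set κ), T j with hQdef
    set P : Submodule R M := ⨆ i ∈ ({i | i ≠ i₀} : Set ι), S i with hPdef
    have hP : IsCompl (S i₀) P := isCompl_of_isInternal hS i₀
    have ψ : Q ≃ₗ[R] P :=
      (Submodule.quotientEquivOfIsCompl (S i₀) Q hcompl).symm.trans
        (Submodule.quotientEquivOfIsCompl (S i₀) P hP)
    -- restricted S decomposition of P
    have hS' : DirectSum.IsInternal
        (fun i : ({i | i ≠ i₀} : Set ι) => comap P.subtype (S i.1)) :=
      DirectSum.isInternal_biSup_submodule_of_iSupIndep _ (hS.submodule_iSupIndep.comp Subtype.val_injective)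
    -- restricted T decomposition of Q, transported to P
    have hT'' : DirectSum.IsInternal
        (fun j : ({j | j ≠ j₀} : Set κ) => comap Q.subtype (T j.1)) :=
      DirectSum.isInternal_biSup_submodule_of_iSupIndep _ (hT.submodule_iSupIndep.comp Subtype.val_injective)
    set T' : ({j | j ≠ j₀} : Set κ) → Submodule R P :=
      fun j => (comap Q.subtype (T j.1)).map (ψ : Q →ₗ[R] P) with hT'def
    have hT' : DirectSum.IsInternal T' := isInternal_map_equiv hT'' ψ
    -- equivalences of the summands
    have eS : ∀ i : ({i | i ≠ i₀} : Set ι),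
        (comap P.subtype (S i.1)) ≃ₗ[R] S i.1 :=
      fun i => Submodule.comapSubtypeEquivOfLe (le_biSup S i.2)
    have eT : ∀ j : ({j | j ≠ j₀} : Set κ), (T' j) ≃ₗ[R] T j.1 := fun j =>
      ((Submodule.equivMapOfInjective (ψ : Q →ₗ[R] P) ψ.injective
          (comap Q.subtype (T j.1))).symm.trans
        (Submodule.comapSubtypeEquivOfLe (le_biSup T j.2)))
    have hS'loc : ∀ i, IsLocalRing (Module.End R
        ((fun i : ({i | i ≠ i₀} : Set ι) => comap P.subtype (S i.1)) i)) :=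
      fun i => isLocalRing_end_congr (eS i).symm (hSloc i.1)
    have hT'loc : ∀ j, IsLocalRing (Module.End R (T' j)) :=
      fun j => isLocalRing_end_congr (eT j).symm (hTloc j.1)
    -- cardinality bookkeeping for K'
    have hKiff : ∀ j : ({j | j ≠ j₀} : Set κ),
        Nonempty ((T' j) ≃ₗ[R] N) ↔ Nonempty ((T j.1) ≃ₗ[R] N) :=
      fun j => ⟨fun ⟨e⟩ => ⟨(eT j).symm.trans e⟩, fun ⟨e⟩ => ⟨(eT j).trans e⟩⟩
    set K' := {j : ({j | j ≠ j₀} : Set κ) | Nonempty ((T' j) ≃ₗ[R] N)} with hK'def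
    have hKval : Subtype.val '' K' = K \ {j₀} := by
      ext j
      simp only [Set.mem_image, Set.mem_diff, Set.mem_singleton_iff]
      constructor
      · rintro ⟨j', hj', rfl⟩
        exact ⟨(hKiff j').mp hj', j'.2⟩
      · rintro ⟨hjK, hjne⟩
        exact ⟨⟨j, hjne⟩, (hKiff ⟨j, hjne⟩).mpr hjK, rfl⟩
    have hKd : (K \ {j₀}).Finite := hK.diff
    have hK'fin : K'.Finite := by
      apply Set.Finite.of_finite_image _ (Set.injOn_of_injective Subtype.val_injective)
      rw [hKval]; exact hKd
    have hK'card : K'.ncard = n := by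
      have h1 : (Subtype.val '' K').ncard = K'.ncard :=
        Set.ncard_image_of_injective _ Subtype.val_injective
      have h2 : (K \ {j₀}).ncard + 1 = K.ncard := Set.ncard_diff_singleton_add_one hj₀ hK
      rw [hn] at h2
      rw [← h1, hKval]
      omega
    -- apply the induction hypothesis
    obtain ⟨hI'fin, hI'card⟩ := ih _ _ hS' hT' hS'loc hT'loc hK'fin hK'card
    set I := {i | Nonempty ((S i) ≃ₗ[R] N)} with hIdef
    have hIiff : ∀ i : ({i | i ≠ i₀} : Set ι),
        Nonempty ((comap P.subtype (S i.1)) ≃ₗ[R] N) ↔ Nonempty ((S i.1) ≃ₗ[R] N) :=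
      fun i => ⟨fun ⟨e⟩ => ⟨(eS i).symm.trans e⟩, fun ⟨e⟩ => ⟨(eS i).trans e⟩⟩
    set I' := {i : ({i | i ≠ i₀} : Set ι) |
      Nonempty ((comap P.subtype (S i.1)) ≃ₗ[R] N)} with hI'def
    have hIval : Subtype.val '' I' = I \ {i₀} := by
      ext i
      simp only [Set.mem_image, Set.mem_diff, Set.mem_singleton_iff]
      constructor
      · rintro ⟨i', hi', rfl⟩
        exact ⟨(hIiff i').mp hi', i'.2⟩
      · rintro ⟨hiI, hine⟩
        exact ⟨⟨i, hine⟩, (hIiff ⟨i, hine⟩).mpr hiI, rfl⟩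
    have hi₀ : i₀ ∈ I := by
      obtain ⟨eN⟩ := hj₀
      exact ⟨eqv₀.symm.trans eN⟩
    have hIdfin : (I \ {i₀}).Finite := by
      rw [← hIval]; exact hI'fin.image _
    have hIfin : I.Finite := by
      have : I ⊆ insert i₀ (I \ {i₀}) := by
        intro x hx
        by_cases hxe : x = i₀
        · exact hxe ▸ Set.mem_insert _ _
        · exact Set.mem_insert_of_mem _ ⟨hx, hxe⟩
      exact (hIdfin.insert i₀).subset this
    refine ⟨hIfin, ?_⟩
    have h2 : (I \ {i₀}).ncard + 1 = I.ncard := Set.ncard_diff_singleton_add_one hi₀ hIfin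
    have h3 : (I \ {i₀}).ncard = n := by
      rw [← hIval, Set.ncard_image_of_injective _ Subtype.val_injective]
      exact hI'card
    omega

end main
section infinite
variable {R : Type*} [Ring R] {M : Type*} [AddCommGroup M] [Module R M]
variable {ι : Type*} {κ : Type*} [DecidableEq ι] [DecidableEq κ]

open Submodule

theorem linearProj_eq_projT {S : ι → Submodule R M} (hS : DirectSum.IsInternal S)
    (i : ι) (y : M) :
    (S i).linearProjOfIsCompl _ (isCompl_of_isInternal hS i) y = projT S hS i y := by
  obtain ⟨s, hs0, hsum⟩ := exists_finset_sum_proj S hS y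
  set pr := (S i).linearProjOfIsCompl _ (isCompl_of_isInternal hS i) with hpr
  have hterm : ∀ i' ∈ s, i' ≠ i → pr ((projT S hS i' y : M)) = 0 := by
    intro i' _ hne
    apply Submodule.linearProjOfIsCompl_apply_right'
    exact le_biSup S (show i' ∈ {i' | i' ≠ i} from hne) (projT S hS i' y).2
  have hmain : pr ((projT S hS i y : M)) = projT S hS i y :=
    Submodule.linearProjOfIsCompl_apply_left _ _
  by_cases hi : i ∈ s
  · calc pr y = pr (∑ i' ∈ s, ((projT S hS i' y : M))) := by rw [hsum]
    _ = ∑ i' ∈ s, pr ((projT S hS i' y : M)) := map_sum _ _ _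
    _ = pr ((projT S hS i y : M)) := Finset.sum_eq_single_of_mem i hi hterm
    _ = projT S hS i y := hmain
  · have h0 : projT S hS i y = 0 := hs0 i hi
    rw [h0]
    calc pr y = pr (∑ i' ∈ s, ((projT S hS i' y : M))) := by rw [hsum]
    _ = ∑ i' ∈ s, pr ((projT S hS i' y : M)) := map_sum _ _ _
    _ = 0 := Finset.sum_eq_zero fun i' hi' => hterm i' hi' (fun h => hi (h ▸ hi'))

/-- for a fixed `j`, only finitely many summands `S i` can be "matched" with `T j` -/
theorem Cj_finite (S : ι → Submodule R M) (T : κ → Submodule R M)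
    (hS : DirectSum.IsInternal S) (hT : DirectSum.IsInternal T)
    (hSloc : ∀ i, IsLocalRing (Module.End R (S i)))
    (hTloc : ∀ j, IsLocalRing (Module.End R (T j))) (j : κ) :
    {i : ι | IsUnit (fmap T hT (isCompl_of_isInternal hS i) j)}.Finite := by
  haveI : Nontrivial (T j) := nontrivial_of_isLocalRing_end (hTloc j)
  obtain ⟨x, hx⟩ := exists_ne (0 : T j)
  have hxM : (x : M) ≠ 0 := fun h => hx (Subtype.ext h)
  obtain ⟨s, hs0, -⟩ := exists_finset_sum_proj S hS (x : M)
  apply Set.Finite.subset (s.finite_toSet)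
  intro i hi
  have hnt : Nontrivial (S i) := nontrivial_of_isLocalRing_end (hSloc i)
  obtain ⟨-, -, hinj⟩ := unit_step T hT (isCompl_of_isInternal hS i) hnt (hTloc j) hi
  have hne := hinj x hxM
  rw [linearProj_eq_projT hS i (x : M)] at hne
  by_contra his
  exact hne (hs0 i his)

/-- the covering map: an embedding of the `S`-side isomorphism class into `K × ℕ` -/
theorem exists_embedding_classes (S : ι → Submodule R M) (T : κ → Submodule R M)
    (hS : DirectSum.IsInternal S) (hT : DirectSum.IsInternal T)
    (hSloc : ∀ i, IsLocalRing (Module.End R (S i)))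
    (hTloc : ∀ j, IsLocalRing (Module.End R (T j)))
    (N : Type*) [AddCommGroup N] [Module R N] :
    Nonempty ({i : ι | Nonempty ((S i) ≃ₗ[R] N)} ↪
      {j : κ | Nonempty ((T j) ≃ₗ[R] N)} × ℕ) := by
  classical
  set Cj : κ → Set ι := fun j => {i : ι | IsUnit (fmap T hT (isCompl_of_isInternal hS i) j)}
    with hCj
  -- choose for each i a matched j
  have hcov : ∀ i : {i : ι | Nonempty ((S i) ≃ₗ[R] N)},
      ∃ j : κ, i.1 ∈ Cj j ∧ Nonempty ((T j) ≃ₗ[R] N) := by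
    rintro ⟨i, ⟨eN⟩⟩
    obtain ⟨j, hj⟩ := exists_isUnit_fmap T hT (isCompl_of_isInternal hS i) (hSloc i)
    have hnt : Nontrivial (S i) := nontrivial_of_isLocalRing_end (hSloc i)
    obtain ⟨⟨eq⟩, -, -⟩ := unit_step T hT (isCompl_of_isInternal hS i) hnt (hTloc j) hj
    exact ⟨j, hj, ⟨eq.symm.trans eN⟩⟩
  choose jf hjmem hjK using hcov
  -- choose for each j an injection of the finite set `Cj j` into ℕ
  have henc : ∀ j : κ, ∃ g : ι → ℕ, Set.InjOn g (Cj j) := by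
    intro j
    obtain ⟨g, hg⟩ :=
      Set.countable_iff_exists_injective.mp (Cj_finite S T hS hT hSloc hTloc j).countable
    refine ⟨fun i => if h : i ∈ Cj j then g ⟨i, h⟩ else 0, fun x hx y hy hxy => ?_⟩
    simp only [dif_pos hx, dif_pos hy] at hxy
    exact congrArg Subtype.val (hg hxy)
  choose enc hencinj using henc
  refine ⟨⟨fun i => (⟨jf i, hjK i⟩, enc (jf i) i.1), ?_⟩⟩
  intro a b hab
  have h1 : jf a = jf b := congrArg Subtype.val (congrArg Prod.fst hab)
  have h2 : enc (jf a) a.1 = enc (jf b) b.1 := congrArg Prod.snd hab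
  rw [← h1] at h2
  have hbmem : (b : ι) ∈ Cj (jf a) := by rw [h1]; exact hjmem b
  exact Subtype.ext (hencinj (jf a) (hjmem a) hbmem h2)
end infinite
section perclass
variable {R : Type*} [Ring R] {M : Type*} [AddCommGroup M] [Module R M]
variable {ι : Type*} {κ : Type*} [DecidableEq ι] [DecidableEq κ]

theorem perClass (S : ι → Submodule R M) (T : κ → Submodule R M)
    (hS : DirectSum.IsInternal S) (hT : DirectSum.IsInternal T)
    (hSloc : ∀ i, IsLocalRing (Module.End R (S i)))
    (hTloc : ∀ j, IsLocalRing (Module.End R (T j)))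
    (N : Type*) [AddCommGroup N] [Module R N] :
    Nonempty ({i : ι | Nonempty ((S i) ≃ₗ[R] N)} ≃ {j : κ | Nonempty ((T j) ≃ₗ[R] N)}) := by
  classical
  set I := {i : ι | Nonempty ((S i) ≃ₗ[R] N)} with hI
  set K := {j : κ | Nonempty ((T j) ≃ₗ[R] N)} with hK
  by_cases hKfin : K.Finite
  · obtain ⟨hIfin, hIcard⟩ := finCase K.ncard S T hS hT hSloc hTloc hKfin rfl
    haveI := hIfin.fintype
    haveI := hKfin.fintype
    refine ⟨Fintype.equivOfCardEq ?_⟩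
    have h1 : I.ncard = Fintype.card I := by rw [Set.ncard_eq_toFinset_card', Set.toFinset_card]
    have h2 : K.ncard = Fintype.card K := by rw [Set.ncard_eq_toFinset_card', Set.toFinset_card]
    rw [← h1, ← h2, hIcard]
  · have hIfin : ¬ I.Finite := by
      intro hIfin
      obtain ⟨hKfin', -⟩ := finCase I.ncard T S hT hS hTloc hSloc hIfin rfl
      exact hKfin hKfin'
    haveI : Infinite K := Set.infinite_coe_iff.mpr hKfin
    haveI : Infinite I := Set.infinite_coe_iff.mpr hIfin
    obtain ⟨F1⟩ := exists_embedding_classes S T hS hT hSloc hTloc N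
    obtain ⟨F2⟩ := exists_embedding_classes T S hT hS hTloc hSloc N
    have hKeq : Cardinal.mk (K × ℕ) = Cardinal.mk K := by
      rw [Cardinal.mk_prod, Cardinal.mk_nat, Cardinal.lift_aleph0, Cardinal.lift_uzero]
      exact Cardinal.mul_aleph0_eq (Cardinal.aleph0_le_mk _)
    have hIeq : Cardinal.mk (I × ℕ) = Cardinal.mk I := by
      rw [Cardinal.mk_prod, Cardinal.mk_nat, Cardinal.lift_aleph0, Cardinal.lift_uzero]
      exact Cardinal.mul_aleph0_eq (Cardinal.aleph0_le_mk _)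
    obtain ⟨eK⟩ := Cardinal.eq.mp hKeq
    obtain ⟨eI⟩ := Cardinal.eq.mp hIeq
    exact Function.Embedding.antisymm (F1.trans eK.toEmbedding) (F2.trans eI.toEmbedding)
end perclass
/-- **Krull–Schmidt–Remak–Azumaya.** If a module `M` decomposes as an internal
direct sum of submodules each of whose endomorphism ring is local, then any two such
decompositions are equivalent: there is a bijection of index sets matching isomorphic summands. -/
theorem krull_schmidt_remak_azumaya
    {R : Type*} [Ring R] {M : Type*} [AddCommGroup M] [Module R M]
    {ι κ : Type*} [DecidableEq ι] [DecidableEq κ] (S : ι → Submodule R M) (T : κ → Submodule R M)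
    (hS : DirectSum.IsInternal S) (hT : DirectSum.IsInternal T)
    (hSloc : ∀ i, IsLocalRing (Module.End R (S i)))
    (hTloc : ∀ j, IsLocalRing (Module.End R (T j))) :
    ∃ e : ι ≃ κ, ∀ i, Nonempty ((S i) ≃ₗ[R] (T (e i))) := by
  classical
  set sd : Setoid κ := ⟨fun j j' => Nonempty ((T j) ≃ₗ[R] (T j')),
    ⟨fun j => ⟨LinearEquiv.refl R (T j)⟩, fun ⟨e⟩ => ⟨e.symm⟩, fun ⟨e⟩ ⟨f⟩ => ⟨e.trans f⟩⟩⟩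
    with hsd
  have hex : ∀ i : ι, ∃ j : κ, Nonempty ((S i) ≃ₗ[R] (T j)) := fun i =>
    (exists_equiv_summand S T hS hT hSloc hTloc i).imp fun j h => h.1
  choose jf hjf using hex
  set f : ι → Quotient sd := fun i => Quotient.mk sd (jf i) with hf
  have hfiber : ∀ c : Quotient sd,
      Nonempty ({i // f i = c} ≃ {j // Quotient.mk sd j = c}) := by
    intro c
    obtain ⟨jc, rfl⟩ := Quotient.exists_rep c
    have e1 : {i // f i = Quotient.mk sd jc} ≃ {i : ι | Nonempty ((S i) ≃ₗ[R] (T jc))} := by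
      refine Equiv.subtypeEquivRight fun i => ?_
      constructor
      · intro h
        obtain ⟨et⟩ := Quotient.exact h
        exact ⟨(hjf i).some.trans et⟩
      · rintro ⟨e⟩
        exact Quotient.sound ⟨(hjf i).some.symm.trans e⟩
    have e2 : {j // Quotient.mk sd j = Quotient.mk sd jc} ≃
        {j : κ | Nonempty ((T j) ≃ₗ[R] (T jc))} := by
      refine Equiv.subtypeEquivRight fun j => ?_
      exact ⟨fun h => Quotient.exact h, fun h => Quotient.sound h⟩
    obtain ⟨mid⟩ := perClass S T hS hT hSloc hTloc (T jc)
    exact ⟨(e1.trans mid).trans e2.symm⟩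
  have g : ∀ c : Quotient sd, {i // f i = c} ≃ {j // Quotient.mk sd j = c} :=
    fun c => (hfiber c).some
  refine ⟨((Equiv.sigmaFiberEquiv f).symm.trans (Equiv.sigmaCongrRight g)).trans
    (Equiv.sigmaFiberEquiv (Quotient.mk sd)), fun i => ?_⟩
  set e := ((Equiv.sigmaFiberEquiv f).symm.trans (Equiv.sigmaCongrRight g)).trans
    (Equiv.sigmaFiberEquiv (Quotient.mk sd)) with he
  have hei : e i = (g (f i) ⟨i, rfl⟩).1 := rfl
  have hmk : Quotient.mk sd (e i) = f i := by
    rw [hei]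
    exact (g (f i) ⟨i, rfl⟩).2
  have : Nonempty ((T (e i)) ≃ₗ[R] (T (jf i))) := Quotient.exact hmk
  obtain ⟨et⟩ := this
  exact ⟨(hjf i).some.trans et.symm⟩
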